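/- Let A, E ∈ ℝ^{m×n} with m ≥ n, rank(A) = n, ‖E‖ < σ_n(A), and let b, e ∈ ℝ^m. If y minimizes ‖Ax − b‖₂ over x ∈ ℝⁿ and ŷ minimizes ‖(A+E)x − (b+e)‖₂ over x ∈ ℝⁿ, then ‖y − ŷ‖₂ ≤ (√2 ‖E‖ ‖b‖₂ + σ_n(A) ‖e‖₂) / (σ_n(A)(σ_n(A) − ‖E‖)). -/

import Mathlib

set_option maxHeartbeats 1000000

open Matrix FiniteDimensional
open scoped InnerProductSpace RealInnerProductSpace

lemma lsq_final (sig eps r2 nh ngh C nr nfy ny nb ne : ℝ)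
    (k1 : sig * ngh ≤ sig * C) (k2 : sig * ((sig - eps) * nh) ≤ sig * ngh)
    (k3 : eps * (sig * ny) ≤ eps * nfy) (k4 : eps * (nr + nfy) ≤ eps * (r2 * nb))
    (k5 : sig * C = eps * nr + sig * ne + sig * (eps * ny)) :
    nh * (sig * (sig - eps)) ≤ r2 * eps * nb + sig * ne := by linarith

lemma lsq_le_of_sq_le_mul {t C : ℝ} (h : t ^ 2 ≤ C * t) (ht : 0 ≤ t) (hC : 0 ≤ C) :
    t ≤ C := by
  rcases eq_or_lt_of_le ht with h0 | h0
  · rw [← h0]; exact hC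
  · have : t * t ≤ C * t := by nlinarith
    exact le_of_mul_le_mul_right this h0

lemma lsq_le_of_sq_le_sq {x s : ℝ} (h : x ^ 2 ≤ s ^ 2) (hs : 0 ≤ s) : x ≤ s := by
  nlinarith [sq_nonneg (x + s), sq_nonneg (x - s)]

lemma lsq_min_orth {F G : Type*} [NormedAddCommGroup F] [InnerProductSpace ℝ F]
    [NormedAddCommGroup G] [InnerProductSpace ℝ G] [FiniteDimensional ℝ F]
    (f : F →ₗ[ℝ] G) (b : G) (y : F)
    (hy : ∀ x, ‖f y - b‖ ≤ ‖f x - b‖) :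
    ∀ x, ⟪b - f y, f x⟫_ℝ = 0 := by
  have key : ‖b - f y‖ = ⨅ w : (↑(LinearMap.range f) : Set G), ‖b - w‖ := by
    apply le_antisymm
    · apply le_ciInf
      rintro ⟨w, x, rfl⟩
      simpa [norm_sub_rev] using hy x
    · exact ciInf_le ⟨0, by rintro t ⟨w, rfl⟩; exact norm_nonneg _⟩
        (⟨f y, LinearMap.mem_range_self f y⟩ : (↑(LinearMap.range f) : Set G))
  have h2 := (Submodule.norm_eq_iInf_iff_real_inner_eq_zero (LinearMap.range f)
    (LinearMap.mem_range_self f y)).1 key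
  intro x
  exact h2 (f x) (LinearMap.mem_range_self f x)

lemma lsq_pyth {G : Type*} [NormedAddCommGroup G] [InnerProductSpace ℝ G]
    [FiniteDimensional ℝ G] (W : Submodule ℝ G) (z : G) :
    ‖z‖ ^ 2 = ‖(Submodule.orthogonalProjectionOnto W z : G)‖ ^ 2 + ‖z - Submodule.orthogonalProjectionOnto W z‖ ^ 2 := by
  have h0 : ⟪z - Submodule.orthogonalProjectionOnto W z, (Submodule.orthogonalProjectionOnto W z : G)⟫_ℝ = 0 :=
    Submodule.starProjection_inner_eq_zero z _ (Submodule.coe_mem _)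
  have hz : z = (Submodule.orthogonalProjectionOnto W z : G) + (z - Submodule.orthogonalProjectionOnto W z) := by abel
  calc ‖z‖ ^ 2 = ‖(Submodule.orthogonalProjectionOnto W z : G) + (z - Submodule.orthogonalProjectionOnto W z)‖ ^ 2 := by
        rw [← hz]
    _ = _ := by
        rw [norm_add_sq_real, real_inner_comm, h0]; ring

lemma lsq_angle_sym {G : Type*} [NormedAddCommGroup G] [InnerProductSpace ℝ G]
    [FiniteDimensional ℝ G] (U V : Submodule ℝ G)
    (hd : Module.finrank ℝ U = Module.finrank ℝ V) {c : ℝ} (hc0 : 0 ≤ c) (hc1 : c < 1)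
    (h : ∀ v ∈ V, ‖v - Submodule.orthogonalProjectionOnto U v‖ ≤ c * ‖v‖) :
    ∀ u ∈ U, ‖u - Submodule.orthogonalProjectionOnto V u‖ ≤ c * ‖u‖ := by
  have hcc : 0 < 1 - c ^ 2 := by nlinarith
  have hB : ∀ v ∈ V, (1 - c ^ 2) * ‖v‖ ^ 2 ≤ ‖(Submodule.orthogonalProjectionOnto U v : G)‖ ^ 2 := by
    intro v hv
    have h1 := lsq_pyth U v
    have h2 := h v hv
    set q : ℝ := ‖v - Submodule.orthogonalProjectionOnto U v‖
    set p : ℝ := ‖(Submodule.orthogonalProjectionOnto U v : G)‖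
    set a : ℝ := ‖v‖
    have hq0 : 0 ≤ q := norm_nonneg _
    have ha0 : 0 ≤ a := norm_nonneg _
    nlinarith [mul_nonneg hc0 ha0]
  set T : V →ₗ[ℝ] U := (Submodule.orthogonalProjectionOnto U : G →ₗ[ℝ] U).comp V.subtype with hT
  have hTapp : ∀ v : V, (T v : G) = (Submodule.orthogonalProjectionOnto U (v : G) : G) := fun v => rfl
  have hTinj : Function.Injective T := by
    rw [← LinearMap.ker_eq_bot, Submodule.eq_bot_iff]
    intro v hv
    rw [LinearMap.mem_ker] at hv
    have h3 : ‖(T v : G)‖ = 0 := by rw [hv]; simp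
    rw [hTapp v] at h3
    have h4 := hB (v : G) v.2
    rw [h3] at h4
    set w : ℝ := ‖(v : G)‖ with hwdef
    have hw0 : (0:ℝ) ≤ w := norm_nonneg _
    have h4' : (1 - c ^ 2) * w ^ 2 ≤ 0 := by simpa using h4
    have h4'' : 0 ≤ (1 - c ^ 2) * w ^ 2 := mul_nonneg hcc.le (sq_nonneg w)
    have h5 : w ^ 2 = 0 := by
      rcases mul_eq_zero.mp (le_antisymm h4' h4'') with h | h
      · linarith
      · exact h
    have h6 : w = 0 := sq_eq_zero_iff.mp h5
    exact (Submodule.coe_eq_zero).mp (norm_eq_zero.mp h6)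
  have hTsurj : Function.Surjective T :=
    (LinearMap.injective_iff_surjective_of_finrank_eq_finrank hd.symm).mp hTinj
  intro u hu
  by_cases hu0 : u = 0
  · simp [hu0]
  obtain ⟨v, hv⟩ := hTsurj ⟨u, hu⟩
  have hPv : (Submodule.orthogonalProjectionOnto U (v : G) : G) = u := by
    rw [← hTapp, hv]
  have h1 : ⟪u, (v : G)⟫_ℝ = ‖u‖ ^ 2 := by
    have e0 : ⟪(v : G) - Submodule.orthogonalProjectionOnto U (v : G), u⟫_ℝ = 0 :=
      Submodule.starProjection_inner_eq_zero (v : G) u hu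
    have e0' : ⟪u, (v : G) - Submodule.orthogonalProjectionOnto U (v : G)⟫_ℝ = 0 := by
      rw [real_inner_comm]; exact e0
    have e1 : ⟪u, (v : G)⟫_ℝ - ⟪u, (Submodule.orthogonalProjectionOnto U (v : G) : G)⟫_ℝ = 0 := by
      rw [← inner_sub_right]; exact e0'
    rw [hPv, real_inner_self_eq_norm_sq] at e1
    linarith
  have h2 : ⟪u, (v : G)⟫_ℝ = ⟪(Submodule.orthogonalProjectionOnto V u : G), (v : G)⟫_ℝ := by
    have e0 : ⟪u - Submodule.orthogonalProjectionOnto V u, (v : G)⟫_ℝ = 0 :=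
      Submodule.starProjection_inner_eq_zero u (v : G) v.2
    have e1 : ⟪u, (v : G)⟫_ℝ - ⟪(Submodule.orthogonalProjectionOnto V u : G), (v : G)⟫_ℝ = 0 := by
      rw [← inner_sub_left]; exact e0
    linarith
  have h3 : ⟪(Submodule.orthogonalProjectionOnto V u : G), (v : G)⟫_ℝ
      ≤ ‖(Submodule.orthogonalProjectionOnto V u : G)‖ * ‖(v : G)‖ := real_inner_le_norm _ _
  have h4 : (1 - c ^ 2) * ‖(v : G)‖ ^ 2 ≤ ‖u‖ ^ 2 := by
    have := hB (v : G) v.2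
    rwa [hPv] at this
  have hun : 0 < ‖u‖ := norm_pos_iff.mpr hu0
  have h6 := lsq_pyth V u
  set q : ℝ := ‖u - Submodule.orthogonalProjectionOnto V u‖
  set p : ℝ := ‖(Submodule.orthogonalProjectionOnto V u : G)‖
  set a : ℝ := ‖u‖
  set w : ℝ := ‖(v : G)‖
  have hp0 : 0 ≤ p := norm_nonneg _
  have hw0 : 0 ≤ w := norm_nonneg _
  have hq0 : 0 ≤ q := norm_nonneg _
  have hpw : a ^ 2 ≤ p * w := by rw [← h1, h2]; exact h3
  have h5 : (1 - c ^ 2) * a ^ 2 ≤ p ^ 2 := by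
    have e1 : a ^ 2 * a ^ 2 ≤ (p * w) * (p * w) :=
      mul_le_mul hpw hpw (sq_nonneg a) (mul_nonneg hp0 hw0)
    have e2 : (1 - c ^ 2) * (a ^ 2 * a ^ 2) ≤ (1 - c ^ 2) * ((p * w) * (p * w)) :=
      mul_le_mul_of_nonneg_left e1 hcc.le
    have e3 : p ^ 2 * ((1 - c ^ 2) * w ^ 2) ≤ p ^ 2 * a ^ 2 :=
      mul_le_mul_of_nonneg_left h4 (sq_nonneg p)
    have e4 : ((1 - c ^ 2) * a ^ 2) * a ^ 2 ≤ p ^ 2 * a ^ 2 := by nlinarith [e2, e3]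
    exact le_of_mul_le_mul_right e4 (by positivity)
  nlinarith [mul_nonneg hc0 hun.le, sq_nonneg (q - c * a), sq_nonneg (q + c * a)]

/-- The spectral (ℓ²-operator) norm of a real matrix. -/
noncomputable def specNorm {m n : ℕ} (M : Matrix (Fin m) (Fin n) ℝ) : ℝ :=
  ‖LinearMap.toContinuousLinearMap (Matrix.toEuclideanLin M)‖

/-- The smallest singular value of a real matrix (the infimum of `‖Mx‖` over
unit vectors `x`). -/
noncomputable def sigmaMin {m n : ℕ} (M : Matrix (Fin m) (Fin n) ℝ) : ℝ :=
  sInf ((fun x : EuclideanSpace ℝ (Fin n) => ‖Matrix.toEuclideanLin M x‖) '' {x | ‖x‖ = 1})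

/-- Error resilience of least squares: if `y` minimizes `‖Ax − b‖₂` and `ŷ`
minimizes `‖(A+E)x − (b+e)‖₂`, where `A` has full column rank `n`, `m ≥ n` and
`‖E‖ < σₙ(A)`, then
`‖y − ŷ‖₂ ≤ (√2 ‖E‖ ‖b‖₂ + σₙ(A) ‖e‖₂) / (σₙ(A)(σₙ(A) − ‖E‖))`. -/
theorem least_squares_stability (m n : ℕ) (hmn : n ≤ m)
    (A E : Matrix (Fin m) (Fin n) ℝ) (hA : A.rank = n) (hE : specNorm E < sigmaMin A)
    (b e : EuclideanSpace ℝ (Fin m)) (y yt : EuclideanSpace ℝ (Fin n))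
    (hy : ∀ x : EuclideanSpace ℝ (Fin n),
      ‖Matrix.toEuclideanLin A y - b‖ ≤ ‖Matrix.toEuclideanLin A x - b‖)
    (hyt : ∀ x : EuclideanSpace ℝ (Fin n),
      ‖Matrix.toEuclideanLin (A + E) yt - (b + e)‖
        ≤ ‖Matrix.toEuclideanLin (A + E) x - (b + e)‖) :
    ‖y - yt‖ ≤ (Real.sqrt 2 * specNorm E * ‖b‖ + sigmaMin A * ‖e‖)
        / (sigmaMin A * (sigmaMin A - specNorm E)) := by
  classical
  set f := Matrix.toEuclideanLin A with hf
  set gE := Matrix.toEuclideanLin E with hgE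
  -- operator norm bound for E
  have hε : ∀ x, ‖gE x‖ ≤ specNorm E * ‖x‖ := by
    intro x
    have := (LinearMap.toContinuousLinearMap (Matrix.toEuclideanLin E)).le_opNorm x
    simpa [specNorm] using this
  have hε0 : 0 ≤ specNorm E := norm_nonneg _
  -- injectivity of f
  have hker : LinearMap.ker (Matrix.mulVecLin A) = ⊥ := by
    have h1 := LinearMap.finrank_range_add_finrank_ker (Matrix.mulVecLin A)
    rw [Matrix.rank] at hA
    have h2 : Module.finrank ℝ (Fin n → ℝ) = n := Module.finrank_fin_fun ℝ
    rw [hA, h2] at h1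
    have h3 : Module.finrank ℝ (LinearMap.ker (Matrix.mulVecLin A)) = 0 := by omega
    exact Submodule.finrank_eq_zero.mp h3
  have f_inj : Function.Injective f := by
    have hmv : Function.Injective (Matrix.mulVecLin A) := LinearMap.ker_eq_bot.mp hker
    intro x1 x2 hx
    apply (WithLp.equiv 2 (Fin n → ℝ)).injective
    apply hmv
    have := congrArg (WithLp.equiv 2 (Fin m → ℝ)) hx
    simpa [hf, Matrix.mulVecLin_apply] using this
  -- σ ≤ ‖f x‖ / ‖x‖
  have hσ_le : ∀ x : EuclideanSpace ℝ (Fin n), sigmaMin A * ‖x‖ ≤ ‖f x‖ := by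
    intro x
    by_cases hx : x = 0
    · simp [hx]
    · have hxn : (0:ℝ) < ‖x‖ := norm_pos_iff.mpr hx
      set u : EuclideanSpace ℝ (Fin n) := ‖x‖⁻¹ • x with hu
      have hun : ‖u‖ = 1 := by
        rw [hu, norm_smul, norm_inv, norm_norm, inv_mul_cancel₀ hxn.ne']
      have hmem : ‖f u‖ ∈ (fun x : EuclideanSpace ℝ (Fin n) => ‖f x‖) '' {x | ‖x‖ = 1} :=
        ⟨u, hun, rfl⟩
      have hbdd : BddBelow ((fun x : EuclideanSpace ℝ (Fin n) => ‖f x‖) '' {x | ‖x‖ = 1}) :=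
        ⟨0, by rintro t ⟨z, _, rfl⟩; exact norm_nonneg _⟩
      have hle : sigmaMin A ≤ ‖f u‖ := csInf_le hbdd hmem
      have hfu : ‖f u‖ = ‖x‖⁻¹ * ‖f x‖ := by
        rw [hu, _root_.map_smul, norm_smul, norm_inv, norm_norm]
      rw [hfu] at hle
      calc sigmaMin A * ‖x‖ ≤ (‖x‖⁻¹ * ‖f x‖) * ‖x‖ := by
            exact mul_le_mul_of_nonneg_right hle hxn.le
        _ = ‖f x‖ := by field_simp
  -- σ > 0
  have hσpos : 0 < sigmaMin A := by
    rcases Nat.eq_zero_or_pos n with hn | hn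
    · exfalso
      subst hn
      have hemp : {x : EuclideanSpace ℝ (Fin 0) | ‖x‖ = 1} = ∅ := by
        ext x
        have : x = 0 := Subsingleton.elim x 0
        simp [this]
      have : sigmaMin A = 0 := by
        rw [sigmaMin, hemp, Set.image_empty, Real.sInf_empty]
      rw [this] at hE
      exact absurd hE (not_lt.mpr hε0)
    · have hcont : Continuous fun x : EuclideanSpace ℝ (Fin n) => ‖f x‖ :=
        (f.continuous_of_finiteDimensional).norm
      have hS : {x : EuclideanSpace ℝ (Fin n) | ‖x‖ = 1}
          = Metric.sphere (0 : EuclideanSpace ℝ (Fin n)) 1 := by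
        ext x; simp [Metric.mem_sphere, dist_zero_right]
      have hcomp : IsCompact ((fun x : EuclideanSpace ℝ (Fin n) => ‖f x‖) '' {x | ‖x‖ = 1}) := by
        rw [hS]
        exact (isCompact_sphere _ _).image hcont
      have hne : ((fun x : EuclideanSpace ℝ (Fin n) => ‖f x‖) '' {x | ‖x‖ = 1}).Nonempty := by
        refine ⟨_, ⟨EuclideanSpace.single (⟨0, hn⟩ : Fin n) (1:ℝ), ?_, rfl⟩⟩
        simp [EuclideanSpace.norm_single]
      have hmem := hcomp.sInf_mem hne
      obtain ⟨x₀, hx₀, hfx₀⟩ := hmem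
      have hx₀0 : x₀ ≠ 0 := by
        intro h0
        rw [h0] at hx₀
        simp at hx₀
      have : f x₀ ≠ 0 := fun h0 => hx₀0 (f_inj (by simpa using h0))
      have : (0:ℝ) < ‖f x₀‖ := norm_pos_iff.mpr this
      rw [sigmaMin, ← hf]
      simpa [← hfx₀] using this
  set g := Matrix.toEuclideanLin (A + E) with hgdef
  have hg : ∀ x, g x = f x + gE x := by
    intro x
    rw [hgdef, hf, hgE, map_add]
    rfl
  have hr : ∀ x, ⟪b - f y, f x⟫_ℝ = 0 := lsq_min_orth f b y hy
  have hrt : ∀ x, ⟪(b + e) - g yt, g x⟫_ℝ = 0 := lsq_min_orth g (b + e) yt hyt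
  have hε0 : 0 ≤ specNorm E := norm_nonneg _
  have hs : 0 < sigmaMin A - specNorm E := by linarith
  -- lower bound for g
  have hg_low : ∀ x, (sigmaMin A - specNorm E) * ‖x‖ ≤ ‖g x‖ := by
    intro x
    have h1 : ‖f x‖ ≤ ‖g x‖ + ‖gE x‖ := by
      calc ‖f x‖ = ‖g x - gE x‖ := by rw [hg x]; congr 1; abel
        _ ≤ ‖g x‖ + ‖gE x‖ := norm_sub_le _ _
    have := hσ_le x
    have := hε x
    nlinarith [norm_nonneg x]
  have g_inj : Function.Injective g := by
    intro x1 x2 hx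
    have h1 : g (x1 - x2) = 0 := by rw [map_sub, hx, sub_self]
    have h2 := hg_low (x1 - x2)
    rw [h1, norm_zero] at h2
    have : ‖x1 - x2‖ ≤ 0 := by
      by_contra hcon
      push_neg at hcon
      nlinarith
    have : x1 - x2 = 0 := norm_eq_zero.mp (le_antisymm this (norm_nonneg _))
    exact sub_eq_zero.mp this
  -- equal finranks of ranges
  have hfr : Module.finrank ℝ (LinearMap.range g) = Module.finrank ℝ (LinearMap.range f) := by
    rw [LinearMap.finrank_range_of_inj f_inj, LinearMap.finrank_range_of_inj g_inj]
  set U : Submodule ℝ (EuclideanSpace ℝ (Fin m)) := LinearMap.range g with hU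
  set V : Submodule ℝ (EuclideanSpace ℝ (Fin m)) := LinearMap.range f with hV
  set c : ℝ := specNorm E / sigmaMin A with hc
  have hc0 : 0 ≤ c := div_nonneg hε0 hσpos.le
  have hc1 : c < 1 := (div_lt_one hσpos).mpr hE
  have hcσ : c * sigmaMin A = specNorm E := div_mul_cancel₀ _ hσpos.ne'
  -- easy direction
  have heasy : ∀ v ∈ V, ‖v - Submodule.orthogonalProjectionOnto U v‖ ≤ c * ‖v‖ := by
    rintro v ⟨x, rfl⟩
    set d := f x - Submodule.orthogonalProjectionOnto U (f x) with hd
    have hdU : ∀ w ∈ U, ⟪d, w⟫_ℝ = 0 := Submodule.starProjection_inner_eq_zero (f x)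
    have h1 : ⟪d, d⟫_ℝ = ⟪d, f x - g x⟫_ℝ := by
      have e1 : ⟪d, g x - Submodule.orthogonalProjectionOnto U (f x)⟫_ℝ = 0 := by
        have e2 := hdU (g x) (LinearMap.mem_range_self g x)
        have e3 := hdU (Submodule.orthogonalProjectionOnto U (f x) : EuclideanSpace ℝ (Fin m))
          (Submodule.coe_mem _)
        rw [inner_sub_right, e2, e3]; ring
      have e4 : ⟪d, f x - Submodule.orthogonalProjectionOnto U (f x)⟫_ℝ
          - ⟪d, g x - Submodule.orthogonalProjectionOnto U (f x)⟫_ℝ = ⟪d, f x - g x⟫_ℝ := by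
        rw [← inner_sub_right]; congr 1; abel
      rw [← hd] at e4
      rw [e1, sub_zero] at e4
      rw [← e4]
    have h2 : ⟪d, f x - g x⟫_ℝ ≤ ‖d‖ * (specNorm E * ‖x‖) := by
      have e1 : ‖f x - g x‖ = ‖gE x‖ := by rw [hg x]; rw [show f x - (f x + gE x) = -(gE x) by abel, norm_neg]
      calc ⟪d, f x - g x⟫_ℝ ≤ ‖d‖ * ‖f x - g x‖ := real_inner_le_norm _ _
        _ = ‖d‖ * ‖gE x‖ := by rw [e1]
        _ ≤ ‖d‖ * (specNorm E * ‖x‖) := mul_le_mul_of_nonneg_left (hε x) (norm_nonneg _)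
    have h3 : specNorm E * ‖x‖ ≤ c * ‖f x‖ := by
      have := hσ_le x
      rw [hc]
      rw [div_mul_eq_mul_div, le_div_iff₀ hσpos]
      nlinarith
    have h4 : ‖d‖ ^ 2 ≤ ‖d‖ * (c * ‖f x‖) := by
      rw [← real_inner_self_eq_norm_sq]
      calc ⟪d, d⟫_ℝ = ⟪d, f x - g x⟫_ℝ := h1
        _ ≤ ‖d‖ * (specNorm E * ‖x‖) := h2
        _ ≤ ‖d‖ * (c * ‖f x‖) := mul_le_mul_of_nonneg_left h3 (norm_nonneg _)
    have hd0 : 0 ≤ ‖d‖ := norm_nonneg _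
    have hcf : 0 ≤ c * ‖f x‖ := mul_nonneg hc0 (norm_nonneg _)
    have h4' : ‖d‖ ^ 2 ≤ (c * ‖f x‖) * ‖d‖ := by linarith [h4]
    exact lsq_le_of_sq_le_mul h4' hd0 hcf
  have hsym := lsq_angle_sym U V hfr hc0 hc1 heasy
  -- key inequality
  have hkey : ∀ u ∈ U, ⟪b - f y, u⟫_ℝ ≤ c * (‖b - f y‖ * ‖u‖) := by
    intro u hu
    have h1 : ⟪b - f y, (Submodule.orthogonalProjectionOnto V u : EuclideanSpace ℝ (Fin m))⟫_ℝ = 0 := by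
      obtain ⟨z, hz⟩ := (Submodule.orthogonalProjectionOnto V u).2
      rw [← hz]
      exact hr z
    have h2 : ⟪b - f y, u⟫_ℝ
        = ⟪b - f y, u - Submodule.orthogonalProjectionOnto V u⟫_ℝ := by
      rw [inner_sub_right, h1, sub_zero]
    rw [h2]
    calc ⟪b - f y, u - Submodule.orthogonalProjectionOnto V u⟫_ℝ
        ≤ ‖b - f y‖ * ‖u - Submodule.orthogonalProjectionOnto V u‖ := real_inner_le_norm _ _
      _ ≤ ‖b - f y‖ * (c * ‖u‖) :=
          mul_le_mul_of_nonneg_left (hsym u hu) (norm_nonneg _)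
      _ = c * (‖b - f y‖ * ‖u‖) := by ring
  -- Pythagoras for b
  set r : EuclideanSpace ℝ (Fin m) := b - f y with hrdef
  have hb2 : ‖b‖ ^ 2 = ‖f y‖ ^ 2 + ‖r‖ ^ 2 := by
    have h0 : ⟪f y, r⟫_ℝ = 0 := by rw [real_inner_comm]; exact hr y
    have hb : b = f y + r := by rw [hrdef]; abel
    calc ‖b‖ ^ 2 = ‖f y + r‖ ^ 2 := by rw [← hb]
      _ = _ := by rw [norm_add_sq_real, h0]; ring
  have hsqrt : ‖r‖ + ‖f y‖ ≤ Real.sqrt 2 * ‖b‖ := by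
    have hsq2 : (Real.sqrt 2) ^ 2 = 2 := Real.sq_sqrt (by norm_num)
    have h1 : (‖r‖ + ‖f y‖) ^ 2 ≤ (Real.sqrt 2 * ‖b‖) ^ 2 := by
      rw [mul_pow, hsq2]
      nlinarith [sq_nonneg (‖r‖ - ‖f y‖)]
    exact lsq_le_of_sq_le_sq h1 (mul_nonneg (Real.sqrt_nonneg 2) (norm_nonneg b))
  -- main computation
  set h' : EuclideanSpace ℝ (Fin n) := yt - y with hh'
  set gh : EuclideanSpace ℝ (Fin m) := g h' with hgh
  have e1 : ⟪(b + e) - g yt, gh⟫_ℝ = 0 := hrt h'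
  have e2 : gh = ((b + e) - g y) - ((b + e) - g yt) := by
    rw [hgh, hh', map_sub]; abel
  have e3 : ⟪gh, gh⟫_ℝ = ⟪(b + e) - g y, gh⟫_ℝ := by
    calc ⟪gh, gh⟫_ℝ = ⟪((b + e) - g y) - ((b + e) - g yt), gh⟫_ℝ := by rw [← e2]
      _ = ⟪(b + e) - g y, gh⟫_ℝ - ⟪(b + e) - g yt, gh⟫_ℝ := inner_sub_left _ _ _
      _ = ⟪(b + e) - g y, gh⟫_ℝ := by rw [e1, sub_zero]
  have e4 : (b + e) - g y = r + (e - gE y) := by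
    rw [hrdef, hg y]; abel
  have e5 : ‖gh‖ ^ 2 = ⟪r, gh⟫_ℝ + ⟪e - gE y, gh⟫_ℝ := by
    rw [← real_inner_self_eq_norm_sq, e3, e4, inner_add_left]
  have bound1 : ⟪r, gh⟫_ℝ ≤ c * (‖r‖ * ‖gh‖) :=
    hkey gh (LinearMap.mem_range_self g h')
  have bound2 : ⟪e - gE y, gh⟫_ℝ ≤ (‖e‖ + specNorm E * ‖y‖) * ‖gh‖ := by
    calc ⟪e - gE y, gh⟫_ℝ ≤ ‖e - gE y‖ * ‖gh‖ := real_inner_le_norm _ _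
      _ ≤ (‖e‖ + specNorm E * ‖y‖) * ‖gh‖ := by
          apply mul_le_mul_of_nonneg_right _ (norm_nonneg _)
          calc ‖e - gE y‖ ≤ ‖e‖ + ‖gE y‖ := norm_sub_le _ _
            _ ≤ ‖e‖ + specNorm E * ‖y‖ := by linarith [hε y]
  set C : ℝ := c * ‖r‖ + ‖e‖ + specNorm E * ‖y‖ with hC
  have hC0 : 0 ≤ C := by
    have := mul_nonneg hc0 (norm_nonneg r)
    have := mul_nonneg hε0 (norm_nonneg y)
    have := norm_nonneg e
    rw [hC]; linarith
  have hghC : ‖gh‖ ≤ C := by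
    have h1 : ‖gh‖ ^ 2 ≤ C * ‖gh‖ := by
      rw [e5]
      calc ⟪r, gh⟫_ℝ + ⟪e - gE y, gh⟫_ℝ
          ≤ c * (‖r‖ * ‖gh‖) + (‖e‖ + specNorm E * ‖y‖) * ‖gh‖ := by linarith
        _ = C * ‖gh‖ := by rw [hC]; ring
    exact lsq_le_of_sq_le_mul h1 (norm_nonneg gh) hC0
  have hlow : (sigmaMin A - specNorm E) * ‖h'‖ ≤ ‖gh‖ := hg_low h'
  have hy_b : sigmaMin A * ‖y‖ ≤ ‖f y‖ := hσ_le y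
  have hnorm_eq : ‖y - yt‖ = ‖h'‖ := by rw [hh', norm_sub_rev]
  have hD : 0 < sigmaMin A * (sigmaMin A - specNorm E) := mul_pos hσpos hs
  rw [hnorm_eq, le_div_iff₀ hD]
  have k1 : sigmaMin A * ‖gh‖ ≤ sigmaMin A * C :=
    mul_le_mul_of_nonneg_left hghC hσpos.le
  have k2 : sigmaMin A * ((sigmaMin A - specNorm E) * ‖h'‖) ≤ sigmaMin A * ‖gh‖ :=
    mul_le_mul_of_nonneg_left hlow hσpos.le
  have k3 : specNorm E * (sigmaMin A * ‖y‖) ≤ specNorm E * ‖f y‖ :=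
    mul_le_mul_of_nonneg_left hy_b hε0
  have k4 : specNorm E * (‖r‖ + ‖f y‖) ≤ specNorm E * (Real.sqrt 2 * ‖b‖) :=
    mul_le_mul_of_nonneg_left hsqrt hε0
  have k5 : sigmaMin A * C = specNorm E * ‖r‖ + sigmaMin A * ‖e‖
      + sigmaMin A * (specNorm E * ‖y‖) := by
    rw [hC]
    have : sigmaMin A * (c * ‖r‖) = specNorm E * ‖r‖ := by
      rw [show sigmaMin A * (c * ‖r‖) = (c * sigmaMin A) * ‖r‖ by ring, hcσ]
    linear_combination this
  exact lsq_final (sigmaMin A) (specNorm E) (Real.sqrt 2) ‖h'‖ ‖gh‖ C ‖r‖ ‖f y‖ ‖y‖ ‖b‖ ‖e‖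
    k1 k2 k3 k4 k5
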